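/- Let G = (V,E) be a finite simple graph, k ≥ 1, and S ⊆ V with |S| ≤ 3k such that G − S is a cluster graph and some connected component of G − S has at least 8k vertices. Let s ∈ S be a vertex such that for every connected component C of G − S one has |N_G(s) ∩ C| < max(|C| − 4k, k+1). Then every X ⊆ V with |X| ≤ k such that G − X is a uniform cluster graph satisfies s ∈ X. -/

import Mathlib

namespace Paper

/-- The graph `G - S` obtained from `G` by deleting the vertices of `S`: edges of `G`
with both endpoints outside `S` (vertices of `S` become isolated). -/
def restrictOutside {V : Type*} (G : SimpleGraph V) (S : Set V) : SimpleGraph V where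
  Adj x y := G.Adj x y ∧ x ∉ S ∧ y ∉ S
  symm := ⟨fun _ _ h => ⟨h.1.symm, h.2.2, h.2.1⟩⟩
  loopless := ⟨fun x h => G.loopless.irrefl x h.1⟩

/-- The vertex set of the connected component of `v` in `G`. -/
def compSet {V : Type*} (G : SimpleGraph V) (v : V) : Set V := {w | G.Reachable v w}

/-- A cluster graph: no induced `P₃`; equivalently, every connected component induces a clique. -/
def IsClusterGraph {V : Type*} (G : SimpleGraph V) : Prop :=
  ∀ ⦃x y z : V⦄, G.Adj x y → G.Adj y z → x ≠ z → G.Adj x z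

/-- `G - X` is a disjoint union of cliques each on exactly `c` vertices. -/
def IsUniformClusterDel {V : Type*} (G : SimpleGraph V) (X : Set V) (c : ℕ) : Prop :=
  ∀ w ∉ X, (restrictOutside G X).IsClique (compSet (restrictOutside G X) w) ∧
    (compSet (restrictOutside G X) w).ncard = c

/-- Suppose `k ≥ 1`, `|S| ≤ 3k`, `G - S` is a cluster graph, some connected component of
`G - S` has at least `8k` vertices, and `s ∈ S` has, in every connected component `C` of
`G - S`, fewer than `max (|C| - 4k) (k + 1)` neighbors.  Then every `X` with `|X| ≤ k`
such that `G - X` is a uniform cluster graph contains `s`. -/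

lemma mem_compSet_self {V : Type*} (H : SimpleGraph V) (v : V) : v ∈ compSet H v :=
  SimpleGraph.Reachable.refl v

lemma compSet_eq_of_mem {V : Type*} {H : SimpleGraph V} {v x : V} (hx : x ∈ compSet H v) :
    compSet H x = compSet H v := by
  ext y
  exact ⟨fun h => hx.trans h, fun h => hx.symm.trans h⟩

lemma cluster_reachable_adj {V : Type*} {H : SimpleGraph V} (h : IsClusterGraph H)
    {x y : V} (hr : H.Reachable x y) : x = y ∨ H.Adj x y := by
  obtain ⟨p⟩ := hr
  induction p with
  | nil => exact Or.inl rfl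
  | cons hadj p ih =>
    rcases ih with rfl | h2
    · exact Or.inr hadj
    · rcases eq_or_ne _ _ with heq | hne
      · exact Or.inl heq
      · exact Or.inr (h hadj h2 hne)

lemma compSet_isClique {V : Type*} {H : SimpleGraph V} (h : IsClusterGraph H) (v : V) :
    H.IsClique (compSet H v) := by
  intro x hx y hy hxy
  rcases cluster_reachable_adj h ((Set.mem_setOf_eq ▸ hx).symm.trans hy) with rfl | hadj
  · exact absurd rfl hxy
  · exact hadj

lemma subset_compSet_of_pairwise {V : Type*} {H : SimpleGraph V} {T : Set V}
    (hT : T.Pairwise H.Adj) {t : V} (ht : t ∈ T) : T ⊆ compSet H t := by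
  intro x hx
  rcases eq_or_ne t x with rfl | hne
  · exact mem_compSet_self H t
  · exact (hT ht hx hne).reachable

theorem stmt7 {V : Type*} [Fintype V] (G : SimpleGraph V) (k : ℕ) (hk : 1 ≤ k)
    (S : Set V) (hScard : S.ncard ≤ 3 * k)
    (hcluster : IsClusterGraph (restrictOutside G S))
    (hbig : ∃ w, w ∉ S ∧ 8 * k ≤ (compSet (restrictOutside G S) w).ncard)
    (s : V) (hsS : s ∈ S)
    (hlight : ∀ w, w ∉ S →
      (compSet (restrictOutside G S) w ∩ G.neighborSet s).ncard <
        max ((compSet (restrictOutside G S) w).ncard - 4 * k) (k + 1))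
    (X : Set V) (hXcard : X.ncard ≤ k)
    (hX : ∃ c, IsUniformClusterDel G X c) :
    s ∈ X := by
  by_contra hsX
  obtain ⟨c, hc⟩ := hX
  obtain ⟨w, hwS, hwbig⟩ := hbig
  set H := restrictOutside G S with hHdef
  set H' := restrictOutside G X with hH'def
  set B := compSet H w with hBdef
  have hBclique : H.IsClique B := compSet_isClique hcluster w
  have hBX : B.ncard ≤ (B \ X).ncard + X.ncard :=
    Set.ncard_le_ncard_diff_add_ncard B X (Set.toFinite _)
  have hBXne : (B \ X).Nonempty := by
    apply Set.nonempty_of_ncard_ne_zero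
    omega
  obtain ⟨b, hbB, hbX⟩ := hBXne
  have hBXpair : (B \ X).Pairwise H'.Adj := by
    intro x hx y hy hne
    exact ⟨(hBclique hx.1 hy.1 hne).1, hx.2, hy.2⟩
  have hsub1 : B \ X ⊆ compSet H' b := subset_compSet_of_pairwise hBXpair ⟨hbB, hbX⟩
  have hcb2 : (compSet H' b).ncard = c := (hc b hbX).2
  have hck : 7 * k ≤ c := by
    have h1 : (B \ X).ncard ≤ (compSet H' b).ncard :=
      Set.ncard_le_ncard hsub1 (Set.toFinite _)
    omega
  set K := compSet H' s with hKdef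
  have hcs := hc s hsX
  have hcs2 : K.ncard = c := (hc s hsX).2
  have hKX : ∀ x ∈ K, x ∉ X := by
    intro x hx
    rcases eq_or_ne x s with rfl | hne
    · exact hsX
    · exact (hcs.1 (mem_compSet_self H' s) hx (fun h => hne h.symm)).2.2
  have hKadj : ∀ x ∈ K, x ≠ s → G.Adj s x := fun x hx hne =>
    (hcs.1 (mem_compSet_self H' s) hx (fun h => hne h.symm)).1
  have hKS : K.ncard ≤ (K \ S).ncard + S.ncard :=
    Set.ncard_le_ncard_diff_add_ncard K S (Set.toFinite _)
  have hKSne : (K \ S).Nonempty := by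
    apply Set.nonempty_of_ncard_ne_zero
    omega
  obtain ⟨t, ht⟩ := hKSne
  have hKSpair : (K \ S).Pairwise H.Adj := by
    intro x hx y hy hne
    exact ⟨(hcs.1 hx.1 hy.1 hne).1, hx.2, hy.2⟩
  set C := compSet H t with hCdef
  have hsub2 : K \ S ⊆ C := subset_compSet_of_pairwise hKSpair ht
  have hCS : ∀ x ∈ C, x ∉ S := by
    intro x hx
    rcases cluster_reachable_adj hcluster hx with rfl | hadj
    · exact ht.2
    · exact hadj.2.2
  have hKS_sub : K \ S ⊆ C ∩ G.neighborSet s := by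
    intro x hx
    refine ⟨hsub2 hx, ?_⟩
    exact hKadj x hx.1 (fun h => hx.2 (h ▸ hsS))
  have h4k : 4 * k ≤ (C ∩ G.neighborSet s).ncard := by
    have h1 : (K \ S).ncard ≤ (C ∩ G.neighborSet s).ncard :=
      Set.ncard_le_ncard hKS_sub (Set.toFinite _)
    omega
  have hlt : (C ∩ G.neighborSet s).ncard < max (C.ncard - 4 * k) (k + 1) := hlight t ht.2
  have hmaxlt : (C ∩ G.neighborSet s).ncard < C.ncard - 4 * k := by
    rcases lt_max_iff.mp hlt with h | h
    · exact h
    · omega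
  have hCXpair : (C \ X).Pairwise H'.Adj := by
    intro x hx y hy hne
    exact ⟨(compSet_isClique hcluster t hx.1 hy.1 hne).1, hx.2, hy.2⟩
  have htCX : t ∈ C \ X := ⟨mem_compSet_self H t, hKX t ht.1⟩
  have hKt : compSet H' t = K := compSet_eq_of_mem ht.1
  have hsub4 : C \ X ⊆ C ∩ G.neighborSet s := by
    intro x hx
    refine ⟨hx.1, ?_⟩
    have hxK : x ∈ K := hKt ▸ subset_compSet_of_pairwise hCXpair htCX hx
    exact hKadj x hxK (fun h => (hCS x hx.1) (h ▸ hsS))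
  have h5 : C.ncard ≤ (C \ X).ncard + X.ncard :=
    Set.ncard_le_ncard_diff_add_ncard C X (Set.toFinite _)
  have h6 : (C \ X).ncard ≤ (C ∩ G.neighborSet s).ncard :=
    Set.ncard_le_ncard hsub4 (Set.toFinite _)
  have h7 : (C ∩ G.neighborSet s).ncard ≤ C.ncard :=
    Set.ncard_le_ncard Set.inter_subset_left (Set.toFinite _)
  omega


end Paper
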